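/- arXiv:2505.04144 — 3 statements merged into one kernel-verified Lean document; each statement's English description precedes it below -/
import Mathlib

section
/- Let G be a connected graph and H a graph, both with at least two vertices, with at least one of them not complete. Then χ_μ(G ∘ H) = 2, where G ∘ H is the lexicographic product. -/
open SimpleGraph

variable {V W : Type*}

/-- Two vertices of `X` are `X`-visible if some geodesic between them has all
internal vertices outside `X`; `X` is a mutual-visibility set if this holds
for every reachable pair of vertices of `X`. -/
def IsMVSet (G : SimpleGraph V) (X : Set V) : Prop :=
  ∀ x ∈ X, ∀ y ∈ X, x ≠ y → G.Reachable x y →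
    ∃ p : G.Walk x y, p.length = G.dist x y ∧
      ∀ z ∈ p.support, z ≠ x → z ≠ y → z ∉ X

/-- An independent mutual-visibility set. -/
def IsIMVSet (G : SimpleGraph V) (X : Set V) : Prop :=
  (∀ x ∈ X, ∀ y ∈ X, ¬ G.Adj x y) ∧ IsMVSet G X

/-- The mutual-visibility chromatic number: the least `k` such that the vertex
set partitions into `k` mutual-visibility sets. -/
noncomputable def mvChrom (G : SimpleGraph V) : ℕ :=
  sInf {k | ∃ f : V → Fin k, ∀ i, IsMVSet G (f ⁻¹' {i})}

/-- The independent mutual-visibility chromatic number. -/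
noncomputable def imvChrom (G : SimpleGraph V) : ℕ :=
  sInf {k | ∃ f : V → Fin k, ∀ i, IsIMVSet G (f ⁻¹' {i})}

/-- The chromatic number, as a natural number. -/
noncomputable def chromNat (G : SimpleGraph V) : ℕ :=
  sInf {k | G.Colorable k}

/-- The independent mutual-visibility number `μᵢ(G)`. -/
noncomputable def imvNum (G : SimpleGraph V) : ℕ :=
  sSup {n | ∃ s : Finset V, IsIMVSet G ↑s ∧ s.card = n}

/-- The independence number `α(G)`. -/
noncomputable def indepNum (G : SimpleGraph V) : ℕ :=
  sSup {n | ∃ s : Finset V, (∀ x ∈ s, ∀ y ∈ s, ¬ G.Adj x y) ∧ s.card = n}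

/-- The lexicographic product `G ∘ H`. -/
def lexProd (G : SimpleGraph V) (H : SimpleGraph W) : SimpleGraph (V × W) where
  Adj a b := G.Adj a.1 b.1 ∨ (a.1 = b.1 ∧ H.Adj a.2 b.2)
  symm := by
    constructor
    rintro a b (h | ⟨h1, h2⟩)
    · exact Or.inl h.symm
    · exact Or.inr ⟨h1.symm, h2.symm⟩
  loopless := by
    constructor
    rintro a (h | ⟨-, h⟩)
    · exact G.irrefl h
    · exact H.irrefl h


section Aux
variable {V W : Type*}

private lemma lex_proj {G : SimpleGraph V} {H : SimpleGraph W} :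
    ∀ {a b : V × W} (p : (lexProd G H).Walk a b), ∃ q : G.Walk a.1 b.1, q.length ≤ p.length := by
  intro a b p
  induction p with
  | nil => exact ⟨Walk.nil, le_rfl⟩
  | cons h p ih =>
    obtain ⟨q, hq⟩ := ih
    rcases id h with h | ⟨h1, h2⟩
    · exact ⟨Walk.cons h q, by simpa using Nat.succ_le_succ hq⟩
    · exact ⟨q.copy h1.symm rfl, by simp only [Walk.length_copy, Walk.length_cons]; omega⟩

private lemma lex_lift {G : SimpleGraph V} {H : SimpleGraph W} (w' : W) :
    ∀ {g g' : V} (p : G.Walk g g') (h h' : W), p.length ≠ 0 →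
      ∃ P : (lexProd G H).Walk (g, h) (g', h'), P.length = p.length ∧
        ∀ z ∈ P.support, z = (g, h) ∨ z = (g', h') ∨ z.2 = w' := by
  intro g g' p
  induction p with
  | nil => intro h h' hl; simp at hl
  | @cons g m g' e q ih =>
    intro h h' _
    cases q with
    | nil =>
      have e0 : (lexProd G H).Adj (g, h) (m, h') := Or.inl e
      refine ⟨Walk.cons e0 Walk.nil, by simp, ?_⟩
      intro z hz
      simp [Walk.support_cons] at hz
      rcases hz with hz | hz
      · exact Or.inl (by simp [hz])
      · exact Or.inr (Or.inl (by simp [hz]))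
    | cons e' q' =>
      obtain ⟨P', hP'len, hP'sup⟩ := ih w' h' (by simp)
      have e0 : (lexProd G H).Adj (g, h) (m, w') := Or.inl e
      refine ⟨Walk.cons e0 P', by simp [hP'len], ?_⟩
      intro z hz
      rw [Walk.support_cons, List.mem_cons] at hz
      rcases hz with hz | hz
      · exact Or.inl hz
      · rcases hP'sup z hz with hz' | hz' | hz'
        · exact Or.inr (Or.inr (by simp [hz']))
        · exact Or.inr (Or.inl hz')
        · exact Or.inr (Or.inr hz')

private lemma exists_neighbor [Fintype V] {G : SimpleGraph V} (hconn : G.Connected)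
    (hV : 2 ≤ Fintype.card V) (g : V) : ∃ g', G.Adj g g' := by
  obtain ⟨v, hv⟩ := Fintype.exists_ne_of_one_lt_card (by omega) g
  obtain ⟨p⟩ := hconn g v
  cases p with
  | nil => exact absurd rfl hv.symm
  | cons e _ => exact ⟨_, e⟩

private lemma not_top_exists {G : SimpleGraph V} (h : G ≠ ⊤) :
    ∃ a b : V, a ≠ b ∧ ¬ G.Adj a b := by
  by_contra hc
  push_neg at hc
  exact h (by ext a b; simp only [top_adj]; exact ⟨fun h' => h'.ne, hc a b⟩)

end Aux

theorem stmt17 [Fintype V] [Fintype W] (G : SimpleGraph V) (H : SimpleGraph W)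
    (hconn : G.Connected) (hV : 2 ≤ Fintype.card V) (hW : 2 ≤ Fintype.card W)
    (hnc : G ≠ ⊤ ∨ H ≠ ⊤) :
    mvChrom (lexProd G H) = 2 := by
  classical
  have hneV : Nonempty V := Fintype.card_pos_iff.mp (by omega)
  have hneW : Nonempty W := Fintype.card_pos_iff.mp (by omega)
  obtain ⟨w₀, hw₀⟩ := Fintype.exists_ne_of_one_lt_card (by omega : 1 < Fintype.card W)
    (Classical.arbitrary W)
  set w₁ := Classical.arbitrary W with hw₁def
  -- reachability in the lexicographic product
  have hreach : ∀ a b : V × W, (lexProd G H).Reachable a b := by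
    rintro ⟨g, h⟩ ⟨g', h'⟩
    have h1 : (lexProd G H).Reachable (g, h) (g', h) :=
      (hconn g g').map (⟨fun v => (v, h), fun e => Or.inl e⟩ : G →g lexProd G H)
    refine h1.trans ?_
    by_cases hh : h = h'
    · subst hh; exact Reachable.refl _
    · obtain ⟨g'', hg''⟩ := exists_neighbor hconn hV g'
      exact ⟨Walk.cons (v := ((g'', h) : V × W)) (Or.inl hg'')
        (Walk.cons (Or.inl hg''.symm) Walk.nil)⟩
  -- the 2-coloring
  set f : V × W → Fin 2 := fun a => if a.2 = w₀ then 0 else 1 with hfdef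
  have hf2 : ∀ i : Fin 2, ∃ w' : W, ∀ z : V × W, z.2 = w' → f z ≠ i := by
    intro i
    by_cases hi : i = 0
    · refine ⟨w₁, fun z hz => ?_⟩
      intro hc
      rw [hfdef] at hc
      simp only [hz, hw₀.symm, if_neg (Ne.symm hw₀)] at hc
      rw [hi] at hc
      exact absurd hc (by decide)
    · refine ⟨w₀, fun z hz => ?_⟩
      intro hc
      rw [hfdef] at hc
      simp only [hz, if_pos rfl] at hc
      exact hi hc.symm
  have hmem2 : 2 ∈ {k | ∃ f : V × W → Fin k, ∀ i, IsMVSet (lexProd G H) (f ⁻¹' {i})} := by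
    refine ⟨f, fun i => ?_⟩
    obtain ⟨w', hw'⟩ := hf2 i
    rintro ⟨g, h⟩ hx ⟨g', h'⟩ hy hne hr
    by_cases hgg : g = g'
    · subst hgg
      have hhh : h ≠ h' := fun hc => hne (by rw [hc])
      by_cases hadj : H.Adj h h'
      · have hadj' : (lexProd G H).Adj (g, h) (g, h') := Or.inr ⟨rfl, hadj⟩
        refine ⟨Walk.cons (v := ((g, h') : V × W)) hadj' Walk.nil, ?_, ?_⟩
        · simp [(dist_eq_one_iff_adj).mpr hadj']
        · intro z hz hz1 hz2
          simp [Walk.support_cons] at hz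
          rcases hz with hz | hz
          · exact absurd (by simp [hz]) hz1
          · exact absurd (by simp [hz]) hz2
      · obtain ⟨g'', hg''⟩ := exists_neighbor hconn hV g
        have e1 : (lexProd G H).Adj (g, h) (g'', w') := Or.inl hg''
        have e2 : (lexProd G H).Adj (g'', w') (g, h') := Or.inl hg''.symm
        refine ⟨Walk.cons e1 (Walk.cons e2 Walk.nil), ?_, ?_⟩
        · have hnadj : ¬ (lexProd G H).Adj (g, h) (g, h') := by
            rintro (ha | ⟨-, ha⟩)
            · exact G.irrefl ha
            · exact hadj ha
          have hle : (lexProd G H).dist (g, h) (g, h') ≤ 2 :=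
            dist_le (Walk.cons e1 (Walk.cons e2 Walk.nil))
          have h0 : (lexProd G H).dist (g, h) (g, h') ≠ 0 :=
            fun hc => hne (hr.dist_eq_zero_iff.mp hc)
          have h1 : (lexProd G H).dist (g, h) (g, h') ≠ 1 := fun hc =>
            hnadj (dist_eq_one_iff_adj.mp hc)
          simp only [Walk.length_cons, Walk.length_nil]
          omega
        · intro z hz hz1 hz2
          simp [Walk.support_cons] at hz
          rcases hz with hz | hz | hz
          · exact absurd (by simp [hz]) hz1
          · intro hzX
            simp only [Set.mem_preimage, Set.mem_singleton_iff] at hzX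
            exact hw' z (by simp [hz]) hzX
          · exact absurd (by simp [hz]) hz2
    · -- different first coordinates
      obtain ⟨p, hplen⟩ := (hconn g g').exists_walk_length_eq_dist
      have hd0 : p.length ≠ 0 := by
        have := hconn.pos_dist_of_ne hgg
        omega
      obtain ⟨P, hPlen, hPsup⟩ := lex_lift (H := H) w' p h h' hd0
      have hdist : (lexProd G H).dist (g, h) (g', h') = G.dist g g' := by
        refine le_antisymm (le_trans (dist_le P) (by rw [hPlen, hplen])) ?_
        obtain ⟨Q, hQlen⟩ := hr.exists_walk_length_eq_dist
        obtain ⟨q, hqlen⟩ := lex_proj Q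
        calc G.dist g g' ≤ q.length := dist_le q
          _ ≤ Q.length := hqlen
          _ = _ := hQlen
      refine ⟨P, by rw [hPlen, hplen, hdist], ?_⟩
      intro z hz hz1 hz2
      rcases hPsup z hz with h'' | h'' | h''
      · exact absurd h'' hz1
      · exact absurd h'' hz2
      · intro hzX
        simp only [Set.mem_preimage, Set.mem_singleton_iff] at hzX
        exact hw' z h'' hzX
  have hne0 : (0 : ℕ) ∉ {k | ∃ f : V × W → Fin k, ∀ i, IsMVSet (lexProd G H) (f ⁻¹' {i})} := by
    rintro ⟨f, -⟩
    exact (f (Classical.arbitrary _)).elim0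
  have hne1 : (1 : ℕ) ∉ {k | ∃ f : V × W → Fin k, ∀ i, IsMVSet (lexProd G H) (f ⁻¹' {i})} := by
    rintro ⟨f, hf⟩
    -- find two nonadjacent distinct vertices
    obtain ⟨x, y, hxy, hnadj⟩ :
        ∃ x y : V × W, x ≠ y ∧ ¬ (lexProd G H).Adj x y := by
      rcases hnc with hG | hH
      · obtain ⟨a, b, hab, hnab⟩ := not_top_exists hG
        refine ⟨(a, w₀), (b, w₀), by simp [hab], ?_⟩
        rintro (h' | ⟨h1, -⟩)
        · exact hnab h'
        · exact hab h1
      · obtain ⟨a, b, hab, hnab⟩ := not_top_exists hH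
        refine ⟨(Classical.arbitrary V, a), (Classical.arbitrary V, b), by simp [hab], ?_⟩
        rintro (h' | ⟨-, h2⟩)
        · exact G.irrefl h'
        · exact hnab h2
    have hr := hreach x y
    have hfx : x ∈ f ⁻¹' {f x} := rfl
    have hfy : y ∈ f ⁻¹' {f x} := by
      simp only [Set.mem_preimage, Set.mem_singleton_iff]
      exact Subsingleton.elim _ _
    obtain ⟨p, hplen, hpsup⟩ := hf (f x) x hfx y hfy hxy hr
    have hd2 : 2 ≤ p.length := by
      have h0 : (lexProd G H).dist x y ≠ 0 := fun hc => hxy (hr.dist_eq_zero_iff.mp hc)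
      have h1 : (lexProd G H).dist x y ≠ 1 := fun hc => hnadj (dist_eq_one_iff_adj.mp hc)
      omega
    cases p with
    | nil => simp at hd2
    | @cons _ m _ e q =>
      have hmx : m ≠ x := e.ne'
      have hmy : m ≠ y := by
        rintro rfl
        exact hnadj e
      have hmem : m ∈ (Walk.cons e q).support := by
        rw [Walk.support_cons, List.mem_cons]
        exact Or.inr q.start_mem_support
      exact hpsup m hmem hmx hmy (Subsingleton.elim (f m) (f x) ▸ rfl)
  have hSne : {k | ∃ f : V × W → Fin k, ∀ i, IsMVSet (lexProd G H) (f ⁻¹' {i})}.Nonempty :=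
    ⟨2, hmem2⟩
  refine le_antisymm (Nat.sInf_le hmem2) (le_csInf hSne ?_)
  intro b hb
  rcases Nat.lt_or_ge b 2 with hb2 | hb2
  · interval_cases b
    · exact absurd hb hne0
    · exact absurd hb hne1
  · exact hb2
end

section
/- If G is a connected graph with at least two vertices and H is a graph with at least one edge, then every independent set of the lexicographic product G ∘ H is an independent mutual-visibility set; consequently χ_{μ_i}(G ∘ H) = χ(G ∘ H) and μ_i(G ∘ H) = α(G)·α(H). -/
open SimpleGraph

variable {V W : Type*}

section Aux
variable {G : SimpleGraph V} {H : SimpleGraph W}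

lemma lex_dist_fst {x y : V × W} (p : (lexProd G H).Walk x y) :
    G.dist x.1 y.1 ≤ p.length := by
  induction p with
  | nil => simp
  | @cons x b y hadj q ih =>
    rcases id hadj with hG | ⟨heq, -⟩
    · by_cases hr : G.Reachable b.1 y.1
      · obtain ⟨w, hw⟩ := hr.exists_walk_length_eq_dist
        have := SimpleGraph.dist_le (SimpleGraph.Walk.cons hG w)
        simp only [SimpleGraph.Walk.length_cons, hw] at this
        simpa [SimpleGraph.Walk.length_cons] using this.trans (by omega)
      · have hnr : ¬ G.Reachable x.1 y.1 := fun h => hr ((hG.symm.reachable).trans h)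
        rw [SimpleGraph.dist_eq_zero_of_not_reachable hnr]
        omega
    · have h2 : G.dist x.1 y.1 = G.dist b.1 y.1 := by rw [heq]
      rw [h2, SimpleGraph.Walk.length_cons]
      omega

lemma lexProd_adj_inl {a b : V × W} (h : G.Adj a.1 b.1) : (lexProd G H).Adj a b := Or.inl h

def liftWalk (G : SimpleGraph V) (H : SimpleGraph W) (f : V → W) (h' : W) :
    ∀ {c d g' : V}, G.Adj c d → (q : G.Walk d g') → (w : W) → (lexProd G H).Walk (c, w) (g', h')
  | _, _, _, hcd, .nil, _ => .cons (lexProd_adj_inl hcd) .nil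
  | _, d, _, hcd, .cons hde q, w => .cons (lexProd_adj_inl hcd) (liftWalk G H f h' hde q (f d))

lemma liftWalk_length (f : V → W) (h' : W) {c d g' : V} (hcd : G.Adj c d)
    (q : G.Walk d g') (w : W) :
    (liftWalk G H f h' hcd q w).length = q.length + 1 := by
  induction q generalizing c w with
  | nil => simp [liftWalk]
  | cons hde q ih => simp [liftWalk, ih]

lemma liftWalk_support (f : V → W) (h' : W) {c d g' : V} (hcd : G.Adj c d)
    (q : G.Walk d g') (w : W) :
    ∀ z ∈ (liftWalk G H f h' hcd q w).support,
      z = (c, w) ∨ z = (g', h') ∨ ∃ v, z = (v, f v) := by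
  induction q generalizing c w with
  | nil =>
    intro z hz
    simp [liftWalk, SimpleGraph.Walk.support_cons] at hz
    tauto
  | @cons d e g' hde q ih =>
    intro z hz
    rw [liftWalk, SimpleGraph.Walk.support_cons, List.mem_cons] at hz
    rcases hz with rfl | hz
    · exact Or.inl rfl
    · rcases ih hde (f d) z hz with h | h | h
      · exact Or.inr (Or.inr ⟨d, h⟩)
      · exact Or.inr (Or.inl h)
      · exact Or.inr (Or.inr h)



lemma indep_isIMV [Fintype V] (G : SimpleGraph V) (H : SimpleGraph W)
    (hconn : G.Connected) (hV : 2 ≤ Fintype.card V) {a b : W} (hab : H.Adj a b)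
    (X : Set (V × W)) (hX : ∀ x ∈ X, ∀ y ∈ X, ¬ (lexProd G H).Adj x y) :
    IsIMVSet (lexProd G H) X := by
  have hex : ∀ v : V, ∃ w, (v, w) ∉ X := by
    intro v
    by_contra hc
    push_neg at hc
    exact hX (v, a) (hc a) (v, b) (hc b) (Or.inr ⟨rfl, hab⟩)
  choose f hf using hex
  refine ⟨hX, ?_⟩
  rintro ⟨g, h⟩ hx ⟨g', h'⟩ hy hne hreach
  by_cases hgg : g = g'
  · subst hgg
    -- find a neighbor of g
    obtain ⟨g₀, hg₀⟩ := Fintype.exists_ne_of_one_lt_card hV g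
    have hnb : ∃ u, G.Adj g u := by
      obtain ⟨p⟩ := hconn g g₀
      cases p with
      | nil => exact absurd rfl hg₀
      | cons hadj _ => exact ⟨_, hadj⟩
    obtain ⟨u, hu⟩ := hnb
    have e1 : (lexProd G H).Adj (g, h) (u, a) := Or.inl hu
    have e2 : (lexProd G H).Adj (u, a) (g, h') := Or.inl hu.symm
    refine ⟨SimpleGraph.Walk.cons e1 (SimpleGraph.Walk.cons e2 SimpleGraph.Walk.nil), ?_, ?_⟩
    · have h2 : (lexProd G H).dist (g, h) (g, h') ≤ 2 :=
        SimpleGraph.dist_le (SimpleGraph.Walk.cons e1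
          (SimpleGraph.Walk.cons e2 SimpleGraph.Walk.nil))
      have h0 : 0 < (lexProd G H).dist (g, h) (g, h') := hreach.pos_dist_of_ne hne
      have h1 : (lexProd G H).dist (g, h) (g, h') ≠ 1 := by
        intro hd
        exact hX _ hx _ hy (SimpleGraph.dist_eq_one_iff_adj.mp hd)
      simp only [SimpleGraph.Walk.length_cons, SimpleGraph.Walk.length_nil]
      omega
    · intro z hz hzx hzy
      simp only [SimpleGraph.Walk.support_cons, SimpleGraph.Walk.support_nil,
        List.mem_cons, List.mem_singleton] at hz
      rcases hz with rfl | rfl | hz2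
      · exact absurd rfl hzx
      · intro hmem
        exact hX _ hx _ hmem (Or.inl hu)
      · simp at hz2
        exact absurd hz2 hzy
  · obtain ⟨q, hq⟩ := hconn.exists_walk_length_eq_dist g g'
    cases q with
    | nil => exact absurd rfl hgg
    | @cons _ d _ hcd q' =>
      refine ⟨liftWalk G H f h' hcd q' h, ?_, ?_⟩
      · have hlen : (liftWalk G H f h' hcd q' h).length = G.dist g g' := by
          rw [liftWalk_length]
          simpa [SimpleGraph.Walk.length_cons] using hq
        rw [hlen]
        -- show lex dist = G.dist g g'
        have hle : (lexProd G H).dist (g, h) (g', h') ≤ G.dist g g' := by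
          have := SimpleGraph.dist_le (liftWalk G H f h' hcd q' h)
          rwa [hlen] at this
        have hge : G.dist g g' ≤ (lexProd G H).dist (g, h) (g', h') := by
          obtain ⟨r, hr⟩ := hreach.exists_walk_length_eq_dist
          have := lex_dist_fst (G := G) (H := H) r
          rwa [hr] at this
        omega
      · intro z hz hzx hzy
        rcases liftWalk_support f h' hcd q' h z hz with rfl | rfl | ⟨v, rfl⟩
        · exact absurd rfl hzx
        · exact absurd rfl hzy
        · exact hf v





lemma bddP {α : Type*} [Fintype α] (P : Finset α → Prop) :
    BddAbove {n | ∃ s : Finset α, P s ∧ s.card = n} :=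
  ⟨Fintype.card α, fun _ ⟨s, _, hc⟩ => hc ▸ s.card_le_univ⟩

theorem part2 [Fintype V] [Fintype W] (G : SimpleGraph V) (H : SimpleGraph W)
    (hconn : G.Connected) (hV : 2 ≤ Fintype.card V) {a b : W} (hab : H.Adj a b) :
    imvChrom (lexProd G H) = chromNat (lexProd G H) := by
  unfold imvChrom chromNat
  congr 1
  ext k
  constructor
  · rintro ⟨f, hfi⟩
    exact ⟨SimpleGraph.Coloring.mk f
      (fun {x y} hadj hfeq => (hfi (f y)).1 x hfeq y rfl hadj)⟩
  · rintro ⟨C⟩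
    refine ⟨C, fun i => indep_isIMV G H hconn hV hab _ ?_⟩
    intro x hx y hy hadj
    exact C.valid hadj (hx.trans hy.symm)

theorem part3 [Fintype V] [Fintype W] (G : SimpleGraph V) (H : SimpleGraph W)
    (hconn : G.Connected) (hV : 2 ≤ Fintype.card V) {a b : W} (hab : H.Adj a b) :
    imvNum (lexProd G H) = _root_.indepNum G * _root_.indepNum H := by
  classical
  have hA : {n | ∃ s : Finset (V × W), IsIMVSet (lexProd G H) ↑s ∧ s.card = n}
      = {n | ∃ s : Finset (V × W),
          (∀ x ∈ s, ∀ y ∈ s, ¬ (lexProd G H).Adj x y) ∧ s.card = n} := by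
    ext n
    constructor
    · rintro ⟨s, hs, rfl⟩
      exact ⟨s, fun x hx y hy => hs.1 x hx y hy, rfl⟩
    · rintro ⟨s, hs, rfl⟩
      exact ⟨s, indep_isIMV G H hconn hV hab _ (fun x hx y hy => hs x hx y hy), rfl⟩
  unfold imvNum
  rw [hA]
  apply le_antisymm
  · have hne0 : (0 : ℕ) ∈ {n | ∃ s : Finset (V × W),
        (∀ x ∈ s, ∀ y ∈ s, ¬ (lexProd G H).Adj x y) ∧ s.card = n} :=
      ⟨∅, by simp, rfl⟩
    apply csSup_le ⟨0, hne0⟩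
    rintro n ⟨s, hs, rfl⟩
    set S := s.image Prod.fst with hSdef
    have hcard : s.card = ∑ g ∈ S, (s.filter fun p => p.1 = g).card :=
      Finset.card_eq_sum_card_image Prod.fst s
    have hfib : ∀ g ∈ S, (s.filter fun p => p.1 = g).card ≤ _root_.indepNum H := by
      intro g _
      have hinj : Set.InjOn Prod.snd
          ((s.filter fun p => p.1 = g : Finset (V × W)) : Set (V × W)) := by
        intro p hp q hq hsnd
        simp only [Finset.coe_filter, Set.mem_setOf_eq] at hp hq
        exact Prod.ext (hp.2.trans hq.2.symm) hsnd
      rw [← Finset.card_image_of_injOn hinj]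
      apply le_csSup (bddP _)
      refine ⟨_, ?_, rfl⟩
      intro h1 ht1 h2 ht2 hadj
      obtain ⟨⟨p1, q1⟩, hp1, hq1⟩ := Finset.mem_image.mp ht1
      obtain ⟨⟨p2, q2⟩, hp2, hq2⟩ := Finset.mem_image.mp ht2
      rw [Finset.mem_filter] at hp1 hp2
      simp only at hq1 hq2
      subst hq1 hq2
      have e1 : p1 = g := hp1.2
      have e2 : p2 = g := hp2.2
      subst e1
      subst e2
      exact hs _ hp1.1 _ hp2.1 (Or.inr ⟨rfl, hadj⟩)
    have hS : S.card ≤ _root_.indepNum G := by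
      apply le_csSup (bddP _)
      refine ⟨S, ?_, rfl⟩
      intro g1 hg1 g2 hg2 hadj
      obtain ⟨p1, hp1, rfl⟩ := Finset.mem_image.mp hg1
      obtain ⟨p2, hp2, rfl⟩ := Finset.mem_image.mp hg2
      exact hs p1 hp1 p2 hp2 (Or.inl hadj)
    calc s.card = ∑ g ∈ S, (s.filter fun p => p.1 = g).card := hcard
      _ ≤ ∑ _g ∈ S, _root_.indepNum H := Finset.sum_le_sum hfib
      _ = S.card * _root_.indepNum H := by rw [Finset.sum_const, smul_eq_mul]
      _ ≤ _root_.indepNum G * _root_.indepNum H := Nat.mul_le_mul_right _ hS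
  · have hG : _root_.indepNum G ∈ {n | ∃ s : Finset V,
        (∀ x ∈ s, ∀ y ∈ s, ¬ G.Adj x y) ∧ s.card = n} :=
      Nat.sSup_mem ⟨0, ∅, by simp⟩ (bddP _)
    have hH : _root_.indepNum H ∈ {n | ∃ s : Finset W,
        (∀ x ∈ s, ∀ y ∈ s, ¬ H.Adj x y) ∧ s.card = n} :=
      Nat.sSup_mem ⟨0, ∅, by simp⟩ (bddP _)
    obtain ⟨sG, hsG, hcG⟩ := hG
    obtain ⟨sH, hsH, hcH⟩ := hH
    apply le_csSup (bddP _)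
    refine ⟨sG ×ˢ sH, ?_, by rw [Finset.card_product, hcG, hcH]⟩
    intro x hx y hy hadj
    rw [Finset.mem_product] at hx hy
    rcases hadj with h | ⟨-, h⟩
    · exact hsG _ hx.1 _ hy.1 h
    · exact hsH _ hx.2 _ hy.2 h

end Aux

theorem stmt18 [Fintype V] [Fintype W] (G : SimpleGraph V) (H : SimpleGraph W)
    (hconn : G.Connected) (hV : 2 ≤ Fintype.card V) (hE : ∃ a b : W, H.Adj a b) :
    (∀ X : Set (V × W), (∀ x ∈ X, ∀ y ∈ X, ¬ (lexProd G H).Adj x y) →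
      IsIMVSet (lexProd G H) X) ∧
    imvChrom (lexProd G H) = chromNat (lexProd G H) ∧
    imvNum (lexProd G H) = _root_.indepNum G * _root_.indepNum H := by
  obtain ⟨a, b, hab⟩ := hE
  exact ⟨fun X hX => indep_isIMV G H hconn hV hab X hX,
    part2 G H hconn hV hab, part3 G H hconn hV hab⟩
end

section
/- If G is a connected graph and n a positive integer, then χ_μ(G □ K_n) ≤ χ_{μ_i}(G), where □ denotes the Cartesian product. -/
open SimpleGraph

variable {V W : Type*}

lemma dist_lower {n : ℕ} (G : SimpleGraph V) (hconn : G.Connected)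
    {u v : V × Fin n} (p : (G.boxProd (⊤ : SimpleGraph (Fin n))).Walk u v) :
    G.dist u.1 v.1 + (if u.2 = v.2 then 0 else 1) ≤ p.length := by
  induction p with
  | nil => simp
  | @cons u w v h q ih =>
    rw [boxProd_adj] at h
    simp only [Walk.length_cons]
    rcases h with ⟨hadj, h2⟩ | ⟨h1, heq⟩
    · have h3 : G.dist u.1 w.1 ≤ 1 := by
        have := dist_le (Walk.cons hadj Walk.nil)
        simpa using this
      have h4 : G.dist u.1 v.1 ≤ G.dist u.1 w.1 + G.dist w.1 v.1 := hconn.dist_triangle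
      rw [h2]
      omega
    · rw [heq]
      have h5 : (if u.2 = v.2 then (0:ℕ) else 1) ≤ 1 := by split <;> omega
      have h6 : (0:ℕ) ≤ (if w.2 = v.2 then (0:ℕ) else 1) := by positivity
      omega


theorem stmt19 [Fintype V] (G : SimpleGraph V) (hconn : G.Connected)
    (n : ℕ) (hn : 0 < n) :
    mvChrom (G.boxProd (⊤ : SimpleGraph (Fin n))) ≤ imvChrom G := by
  have hSne : {k | ∃ f : V → Fin k, ∀ i, IsIMVSet G (f ⁻¹' {i})}.Nonempty := by
    refine ⟨Fintype.card V, Fintype.equivFin V, fun i => ⟨?_, ?_⟩⟩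
    · intro x hx y hy hadj
      have : x = y := (Fintype.equivFin V).injective (hx.trans hy.symm)
      exact G.irrefl (this ▸ hadj)
    · intro x hx y hy hne _
      exact absurd ((Fintype.equivFin V).injective (hx.trans hy.symm)) hne
  have hmem : ∃ f : V → Fin (imvChrom G), ∀ i, IsIMVSet G (f ⁻¹' {i}) :=
    Nat.sInf_mem hSne
  obtain ⟨f, hf⟩ := hmem
  apply Nat.sInf_le
  refine ⟨fun p => f p.1, fun i => ?_⟩
  set X : Set V := f ⁻¹' {i} with hXdef
  have hind := (hf i).1
  have hmv := (hf i).2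
  classical
  rintro ⟨x, a⟩ hx ⟨y, b⟩ hy hne hreach
  have hx' : x ∈ X := hx
  have hy' : y ∈ X := hy
  obtain ⟨q0, hq0⟩ := hreach.exists_walk_length_eq_dist
  by_cases hxy : x = y
  · subst hxy
    have hab : a ≠ b := fun h => hne (by rw [h])
    have e : (G.boxProd (⊤ : SimpleGraph (Fin n))).Adj (x, a) (x, b) :=
      boxProd_adj.2 (Or.inr ⟨hab, rfl⟩)
    refine ⟨Walk.cons e Walk.nil, ?_, ?_⟩
    · have h1 : (G.boxProd (⊤ : SimpleGraph (Fin n))).dist (x, a) (x, b) ≤ 1 :=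
        dist_le (Walk.cons e Walk.nil)
      have h2 := hreach.pos_dist_of_ne hne
      simp only [Walk.length_cons, Walk.length_nil]
      omega
    · intro z hz hz1 hz2
      simp only [Walk.support_cons, Walk.support_nil, List.mem_cons,
        List.mem_singleton] at hz
      rcases hz with rfl | rfl | h
      · exact absurd rfl hz1
      · exact absurd rfl hz2
      · simp at h
  · obtain ⟨p, hplen, hpavoid⟩ := hmv x hx' y hy' hxy (hconn x y)
    by_cases hab : a = b
    · subst hab
      refine ⟨p.boxProdLeft ⊤ a, ?_, ?_⟩
      · have hlen : (p.boxProdLeft ⊤ a).length = p.length := by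
          exact Walk.length_map _ _
        have h1 : (G.boxProd (⊤ : SimpleGraph (Fin n))).dist (x, a) (y, a) ≤ p.length :=
          hlen ▸ dist_le (p.boxProdLeft ⊤ a)
        have h2 : G.dist x y ≤ (G.boxProd (⊤ : SimpleGraph (Fin n))).dist (x, a) (y, a) := by
          have := dist_lower G hconn q0
          simpa [hq0] using this
        rw [hlen]
        omega
      · intro z hz hz1 hz2
        have hz' : z ∈ p.support.map (·, a) := by
          exact (congrArg (z ∈ ·) (Walk.support_map (G.boxProdLeft ⊤ a).toHom p)).mp hz
        obtain ⟨w, hw, rfl⟩ := List.mem_map.1 hz'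
        have hwx : w ≠ x := fun h => hz1 (by rw [h])
        have hwy : w ≠ y := fun h => hz2 (by rw [h])
        exact fun hmem => hpavoid w hw hwx hwy hmem
    · have hnadj : ¬ G.Adj x y := hind x hx' y hy'
      have hd1 : 1 ≤ G.dist x y := (hconn x y).pos_dist_of_ne hxy
      have hd2 : 2 ≤ G.dist x y := by
        have : G.dist x y ≠ 1 := fun h => hnadj (dist_eq_one_iff_adj.1 h)
        omega
      cases p with
      | nil => exact absurd rfl hxy
      | @cons _ z _ h' q =>
        simp only [Walk.length_cons] at hplen
        have hzx : z ≠ x := fun h => G.irrefl (h ▸ h')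
        have hzy : z ≠ y := fun h => hnadj (h ▸ h')
        have hzX : z ∉ X := hpavoid z (by simp) hzx hzy
        have hxq : x ∉ q.support := by
          intro hmem
          have := Walk.length_dropUntil_le q hmem
          have := dist_le (q.dropUntil x hmem)
          omega
        have e1 : (G.boxProd (⊤ : SimpleGraph (Fin n))).Adj (x, a) (z, a) :=
          boxProd_adj.2 (Or.inl ⟨h', rfl⟩)
        have e2 : (G.boxProd (⊤ : SimpleGraph (Fin n))).Adj (z, a) (z, b) :=
          boxProd_adj.2 (Or.inr ⟨(top_adj a b).2 hab, rfl⟩)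
        refine ⟨Walk.cons e1 (Walk.cons e2 (q.boxProdLeft ⊤ b)), ?_, ?_⟩
        · have hlen : (q.boxProdLeft ⊤ b).length = q.length := by
            exact Walk.length_map _ _
          have h1 : (G.boxProd (⊤ : SimpleGraph (Fin n))).dist (x, a) (y, b)
              ≤ q.length + 2 := by
            have := dist_le (Walk.cons e1 (Walk.cons e2 (q.boxProdLeft ⊤ b)))
            simpa [hlen] using this
          have h2 : G.dist x y + 1 ≤ (G.boxProd (⊤ : SimpleGraph (Fin n))).dist (x, a) (y, b) := by
            have := dist_lower G hconn q0
            simpa [hq0, hab] using this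
          simp only [Walk.length_cons, hlen]
          omega
        · intro w hw hw1 hw2
          simp only [Walk.support_cons, List.mem_cons] at hw
          rcases hw with rfl | rfl | hw
          · exact absurd rfl hw1
          · intro hmem
            exact hzX hmem
          · have hw' : w ∈ q.support.map (·, b) := by
              exact (congrArg (w ∈ ·) (Walk.support_map (G.boxProdLeft ⊤ b).toHom q)).mp hw
            obtain ⟨w', hw'mem, rfl⟩ := List.mem_map.1 hw'
            have hwx : w' ≠ x := fun h => hxq (h ▸ hw'mem)
            have hwy : w' ≠ y := fun h => hw2 (by rw [h])
            exact fun hmem => hpavoid w' (by simp [hw'mem]) hwx hwy hmem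
end
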